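/- Let H(x,y,z) = x² + y² + z² − 2(σ+ρ)z and W₂ = ln H on the region where H > 1. Then for the generator L of the stochastic Lorenz system with β < 0, LW₂ = [2|β|z² − 2y² − 2σx² − 2|β|(σ+ρ)z + 2(γ₁+γ₂+γ₃)]/H − 4[x²γ₁ + y²γ₂ + (z−(σ+ρ))²γ₃]/H², and there exists a constant K > 0 such that LW₂(x,y,z) ≤ K for all (x,y,z) in the region where H > 1. -/

import Mathlib

noncomputable def dX (f : ℝ → ℝ → ℝ → ℝ) : ℝ → ℝ → ℝ → ℝ :=
  fun x y z => deriv (fun t => f t y z) x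

noncomputable def dY (f : ℝ → ℝ → ℝ → ℝ) : ℝ → ℝ → ℝ → ℝ :=
  fun x y z => deriv (fun t => f x t z) y

noncomputable def dZ (f : ℝ → ℝ → ℝ → ℝ) : ℝ → ℝ → ℝ → ℝ :=
  fun x y z => deriv (fun t => f x y t) z

/-- The generator of the stochastic Lorenz system. -/
noncomputable def lorenzGen (σ ρ β γ1 γ2 γ3 : ℝ) (f : ℝ → ℝ → ℝ → ℝ)
    (x y z : ℝ) : ℝ :=
  σ * (y - x) * dX f x y z + (x * (ρ - z) - y) * dY f x y z +
    (x * y - β * z) * dZ f x y z +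
    γ1 * dX (dX f) x y z + γ2 * dY (dY f) x y z + γ3 * dZ (dZ f) x y z

lemma quad_hasDeriv (a b x : ℝ) :
    HasDerivAt (fun t : ℝ => t^2 + b*t + a) (2*x + b) x := by
  have h1 : HasDerivAt (fun t : ℝ => t^2 + b*t + a) (((2:ℕ):ℝ) * x^(2-1) + b*1) x :=
    (((hasDerivAt_pow 2 x).add ((hasDerivAt_id x).const_mul b)).add_const a)
  convert h1 using 1
  simp

lemma deriv_log_quad (a b x : ℝ) (h : 0 < x^2 + b*x + a) :
    deriv (fun t => Real.log (t^2 + b*t + a)) x = (2*x + b) / (x^2 + b*x + a) :=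
  ((quad_hasDeriv a b x).log h.ne').deriv

lemma deriv2_log_quad (a b x : ℝ) (h : 0 < x^2 + b*x + a) :
    deriv (deriv (fun t => Real.log (t^2 + b*t + a))) x =
      2 / (x^2 + b*x + a) - (2*x + b)^2 / (x^2 + b*x + a)^2 := by
  have hcont : Continuous (fun t : ℝ => t^2 + b*t + a) := by continuity
  have hev : ∀ᶠ t in nhds x, 0 < t^2 + b*t + a :=
    hcont.continuousAt.eventually (eventually_gt_nhds h)
  have heq : deriv (fun t => Real.log (t^2 + b*t + a)) =ᶠ[nhds x]
      fun t => (2*t + b) / (t^2 + b*t + a) :=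
    hev.mono fun t ht => deriv_log_quad a b t ht
  rw [heq.deriv_eq]
  have hd : HasDerivAt (fun t : ℝ => (2*t + b) / (t^2 + b*t + a))
      ((2 * (x^2+b*x+a) - (2*x+b)*(2*x+b)) / (x^2+b*x+a)^2) x := by
    have hu : HasDerivAt (fun t : ℝ => 2*t + b) 2 x := by
      simpa using ((hasDerivAt_id x).const_mul 2).add_const b
    exact hu.div (quad_hasDeriv a b x) h.ne'
  rw [hd.deriv]
  field_simp

set_option maxHeartbeats 1600000 in
/-- with `H(x,y,z) = x²+y²+z²−2(σ+ρ)z` and `W₂ = ln H` on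
`{H > 1}`, for the Lorenz generator with `β < 0`,
`LW₂ = [2|β|z² − 2y² − 2σx² − 2|β|(σ+ρ)z + 2(γ₁+γ₂+γ₃)]/H
  − 4[x²γ₁ + y²γ₂ + (z−(σ+ρ))²γ₃]/H²`, and there is `K > 0` with
`LW₂ ≤ K` on `{H > 1}`. -/
theorem log_H_generator_bounded (σ ρ β γ1 γ2 γ3 : ℝ)
    (hσ : 0 < σ) (hρ : 0 ≤ ρ) (hβ : β < 0)
    (hγ1 : 0 ≤ γ1) (hγ2 : 0 ≤ γ2) (hγ3 : 0 ≤ γ3) :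
    (∀ x y z : ℝ,
      1 < x ^ 2 + y ^ 2 + z ^ 2 - 2 * (σ + ρ) * z →
      lorenzGen σ ρ β γ1 γ2 γ3
        (fun x y z => Real.log (x ^ 2 + y ^ 2 + z ^ 2 - 2 * (σ + ρ) * z))
        x y z =
        (2 * |β| * z ^ 2 - 2 * y ^ 2 - 2 * σ * x ^ 2 -
          2 * |β| * (σ + ρ) * z + 2 * (γ1 + γ2 + γ3)) /
            (x ^ 2 + y ^ 2 + z ^ 2 - 2 * (σ + ρ) * z) -
          4 * (x ^ 2 * γ1 + y ^ 2 * γ2 + (z - (σ + ρ)) ^ 2 * γ3) /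
            (x ^ 2 + y ^ 2 + z ^ 2 - 2 * (σ + ρ) * z) ^ 2) ∧
    ∃ K : ℝ, 0 < K ∧ ∀ x y z : ℝ,
      1 < x ^ 2 + y ^ 2 + z ^ 2 - 2 * (σ + ρ) * z →
      lorenzGen σ ρ β γ1 γ2 γ3
        (fun x y z => Real.log (x ^ 2 + y ^ 2 + z ^ 2 - 2 * (σ + ρ) * z))
        x y z ≤ K := by
  have habs : |β| = -β := abs_of_neg hβ
  have key : ∀ x y z : ℝ,
      1 < x ^ 2 + y ^ 2 + z ^ 2 - 2 * (σ + ρ) * z →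
      lorenzGen σ ρ β γ1 γ2 γ3
        (fun x y z => Real.log (x ^ 2 + y ^ 2 + z ^ 2 - 2 * (σ + ρ) * z))
        x y z =
        (2 * |β| * z ^ 2 - 2 * y ^ 2 - 2 * σ * x ^ 2 -
          2 * |β| * (σ + ρ) * z + 2 * (γ1 + γ2 + γ3)) /
            (x ^ 2 + y ^ 2 + z ^ 2 - 2 * (σ + ρ) * z) -
          4 * (x ^ 2 * γ1 + y ^ 2 * γ2 + (z - (σ + ρ)) ^ 2 * γ3) /
            (x ^ 2 + y ^ 2 + z ^ 2 - 2 * (σ + ρ) * z) ^ 2 := by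
    intro x y z hH1
    have hH : (0:ℝ) < x ^ 2 + y ^ 2 + z ^ 2 - 2 * (σ + ρ) * z :=
      lt_trans one_pos hH1
    have hx : (0:ℝ) < x^2 + 0*x + (y^2 + z^2 - 2*(σ+ρ)*z) := by nlinarith
    have hy : (0:ℝ) < y^2 + 0*y + (x^2 + z^2 - 2*(σ+ρ)*z) := by nlinarith
    have hz : (0:ℝ) < z^2 + (-(2*(σ+ρ)))*z + (x^2 + y^2) := by nlinarith
    have ex : (fun t : ℝ => Real.log (t ^ 2 + y ^ 2 + z ^ 2 - 2 * (σ + ρ) * z))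
        = (fun t : ℝ => Real.log (t^2 + 0*t + (y^2 + z^2 - 2*(σ+ρ)*z))) := by
      funext t; ring_nf
    have ey : (fun t : ℝ => Real.log (x ^ 2 + t ^ 2 + z ^ 2 - 2 * (σ + ρ) * z))
        = (fun t : ℝ => Real.log (t^2 + 0*t + (x^2 + z^2 - 2*(σ+ρ)*z))) := by
      funext t; ring_nf
    have ez : (fun t : ℝ => Real.log (x ^ 2 + y ^ 2 + t ^ 2 - 2 * (σ + ρ) * t))
        = (fun t : ℝ => Real.log (t^2 + (-(2*(σ+ρ)))*t + (x^2 + y^2))) := by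
      funext t; ring_nf
    simp only [lorenzGen, dX, dY, dZ]
    rw [ex, ey, ez, deriv_log_quad _ _ _ hx, deriv_log_quad _ _ _ hy,
      deriv_log_quad _ _ _ hz]
    rw [show (fun t => deriv (fun s : ℝ =>
        Real.log (s^2 + 0*s + (y^2 + z^2 - 2*(σ+ρ)*z))) t)
        = deriv (fun s : ℝ => Real.log (s^2 + 0*s + (y^2 + z^2 - 2*(σ+ρ)*z)))
        from rfl]
    rw [show (fun t => deriv (fun s : ℝ =>
        Real.log (s^2 + 0*s + (x^2 + z^2 - 2*(σ+ρ)*z))) t)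
        = deriv (fun s : ℝ => Real.log (s^2 + 0*s + (x^2 + z^2 - 2*(σ+ρ)*z)))
        from rfl]
    rw [show (fun t => deriv (fun s : ℝ =>
        Real.log (s^2 + (-(2*(σ+ρ)))*s + (x^2 + y^2))) t)
        = deriv (fun s : ℝ => Real.log (s^2 + (-(2*(σ+ρ)))*s + (x^2 + y^2)))
        from rfl]
    rw [deriv2_log_quad _ _ _ hx, deriv2_log_quad _ _ _ hy,
      deriv2_log_quad _ _ _ hz, habs]
    have h1 : x^2 + 0*x + (y^2 + z^2 - 2*(σ+ρ)*z)
        = x ^ 2 + y ^ 2 + z ^ 2 - 2 * (σ + ρ) * z := by ring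
    have h2 : y^2 + 0*y + (x^2 + z^2 - 2*(σ+ρ)*z)
        = x ^ 2 + y ^ 2 + z ^ 2 - 2 * (σ + ρ) * z := by ring
    have h3 : z^2 + (-(2*(σ+ρ)))*z + (x^2 + y^2)
        = x ^ 2 + y ^ 2 + z ^ 2 - 2 * (σ + ρ) * z := by ring
    rw [h1, h2, h3]
    have hne : (x ^ 2 + y ^ 2 + z ^ 2 - 2 * (σ + ρ) * z) ≠ 0 := hH.ne'
    generalize hgen : x ^ 2 + y ^ 2 + z ^ 2 - 2 * (σ + ρ) * z = h at hne ⊢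
    field_simp
    ring
  refine ⟨key, ?_⟩
  set A : ℝ := 2*(-β) + 1 with hA
  set D : ℝ := (2*(-β) + 2) * (σ + ρ) with hD
  set B : ℝ := 2*(γ1+γ2+γ3) + D^2/4 with hB
  have hApos : 0 < A := by have := hβ; simp only [hA]; nlinarith
  have hDnn : 0 ≤ D := by
    apply mul_nonneg _ (by linarith)
    nlinarith
  have hBnn : 0 ≤ B := by positivity
  refine ⟨A + B, by linarith, fun x y z h => ?_⟩
  rw [key x y z h]
  have hH : (0:ℝ) < x ^ 2 + y ^ 2 + z ^ 2 - 2 * (σ + ρ) * z :=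
    lt_trans one_pos h
  have hsub : 0 ≤ 4 * (x ^ 2 * γ1 + y ^ 2 * γ2 + (z - (σ + ρ)) ^ 2 * γ3) /
      (x ^ 2 + y ^ 2 + z ^ 2 - 2 * (σ + ρ) * z) ^ 2 := by positivity
  have hmain : (2 * |β| * z ^ 2 - 2 * y ^ 2 - 2 * σ * x ^ 2 -
      2 * |β| * (σ + ρ) * z + 2 * (γ1 + γ2 + γ3)) /
        (x ^ 2 + y ^ 2 + z ^ 2 - 2 * (σ + ρ) * z) ≤ A + B := by
    rw [div_le_iff₀ hH, habs]
    have h1 : (1:ℝ) ≤ x ^ 2 + y ^ 2 + z ^ 2 - 2 * (σ + ρ) * z := h.le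
    have hBH : 0 ≤ B * ((x ^ 2 + y ^ 2 + z ^ 2 - 2 * (σ + ρ) * z) - 1) :=
      mul_nonneg hBnn (by linarith)
    simp only [hA, hB, hD] at hBH ⊢
    nlinarith [sq_nonneg (z - (2*(-β) + 2) * (σ + ρ)/2),
      mul_nonneg (neg_nonneg.2 hβ.le) (sq_nonneg x),
      mul_nonneg (neg_nonneg.2 hβ.le) (sq_nonneg y),
      mul_nonneg hσ.le (sq_nonneg x), sq_nonneg y, hBH]
  linarith
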